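/- Let 0 < 2ε ≤ d, 4ε + d ≤ η ≤ 1/4, and let Γ be a 2-colored (ε,d)-reduced graph of a 2-colored balanced bipartite graph G on parts of size n (n large), arising from the bipartite degree form of the regularity lemma with clusters U₁,…,U_k, V₁,…,V_k of common size m and exceptional sets of size at most εn. If the coloring of Γ is η-extremal, then the coloring of G is 2η-extremal. -/

import Mathlib

open SimpleGraph Set

/-- Number of edges of `K` from `A` to `B'` (as ordered pairs). -/
noncomputable def eCount {V : Type*} (K : SimpleGraph V) (A B' : Set V) : ℕ :=
  {p : V × V | p.1 ∈ A ∧ p.2 ∈ B' ∧ K.Adj p.1 p.2}.ncard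

section helpers
variable {V : Type*} [Fintype V] (K : SimpleGraph V)

lemma my_ncard_prod (s t : Set V) : (s ×ˢ t).ncard = s.ncard * t.ncard := by
  classical
  rw [← Set.coe_toFinset s, ← Set.coe_toFinset t, ← Finset.coe_product,
    Set.ncard_coe_finset, Set.ncard_coe_finset, Set.ncard_coe_finset, Finset.card_product]

lemma eCount_mono {A A' B B' : Set V} (hA : A ⊆ A') (hB : B ⊆ B') :
    eCount K A B ≤ eCount K A' B' :=
  Set.ncard_le_ncard (fun p hp => ⟨hA hp.1, hB hp.2.1, hp.2.2⟩) (Set.toFinite _)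

lemma eCount_le_mul (A B : Set V) : eCount K A B ≤ A.ncard * B.ncard := by
  rw [← my_ncard_prod]
  exact Set.ncard_le_ncard (fun p hp => ⟨hp.1, hp.2.1⟩) (Set.toFinite _)

lemma eCount_union_left (A A' B : Set V) :
    eCount K (A ∪ A') B ≤ eCount K A B + eCount K A' B := by
  have hset : {p : V × V | p.1 ∈ A ∪ A' ∧ p.2 ∈ B ∧ K.Adj p.1 p.2}
      = {p : V × V | p.1 ∈ A ∧ p.2 ∈ B ∧ K.Adj p.1 p.2}
        ∪ {p : V × V | p.1 ∈ A' ∧ p.2 ∈ B ∧ K.Adj p.1 p.2} := by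
    ext p; simp only [Set.mem_setOf_eq, Set.mem_union]; tauto
  rw [eCount, hset]
  exact Set.ncard_union_le _ _

lemma eCount_union_right (A B B' : Set V) :
    eCount K A (B ∪ B') ≤ eCount K A B + eCount K A B' := by
  have hset : {p : V × V | p.1 ∈ A ∧ p.2 ∈ B ∪ B' ∧ K.Adj p.1 p.2}
      = {p : V × V | p.1 ∈ A ∧ p.2 ∈ B ∧ K.Adj p.1 p.2}
        ∪ {p : V × V | p.1 ∈ A ∧ p.2 ∈ B' ∧ K.Adj p.1 p.2} := by
    ext p; simp only [Set.mem_setOf_eq, Set.mem_union]; tauto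
  rw [eCount, hset]
  exact Set.ncard_union_le _ _

lemma eCount_empty_left (B : Set V) : eCount K ∅ B = 0 := by
  simp [eCount]

lemma eCount_empty_right (A : Set V) : eCount K A ∅ = 0 := by
  simp [eCount]

lemma eCount_biUnion_left {ι : Type*} [DecidableEq ι] (s : Finset ι) (f : ι → Set V) (B : Set V) :
    eCount K (⋃ i ∈ s, f i) B ≤ ∑ i ∈ s, eCount K (f i) B := by
  induction s using Finset.induction_on with
  | empty => simp [eCount_empty_left]
  | insert _ _ h ih =>
    rw [Finset.set_biUnion_insert, Finset.sum_insert h]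
    exact le_trans (eCount_union_left K _ _ _) (by gcongr)

lemma eCount_biUnion_right {ι : Type*} [DecidableEq ι] (s : Finset ι) (f : ι → Set V) (A : Set V) :
    eCount K A (⋃ i ∈ s, f i) ≤ ∑ i ∈ s, eCount K A (f i) := by
  induction s using Finset.induction_on with
  | empty => simp [eCount_empty_right]
  | insert _ _ h ih =>
    rw [Finset.set_biUnion_insert, Finset.sum_insert h]
    exact le_trans (eCount_union_right K _ _ _) (by gcongr)

lemma ncard_biUnion_eq {ι : Type*} [DecidableEq ι] (s : Finset ι) (f : ι → Set V)
    (hdisj : ∀ i ∈ s, ∀ j ∈ s, i ≠ j → Disjoint (f i) (f j)) :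
    (⋃ i ∈ s, f i).ncard = ∑ i ∈ s, (f i).ncard := by
  induction s using Finset.induction_on with
  | empty => simp
  | @insert a s h ih =>
    rw [Finset.set_biUnion_insert, Finset.sum_insert h,
      Set.ncard_union_eq ?_ (Set.toFinite _) (Set.toFinite _),
      ih (fun i hi j hj hij => hdisj i (Finset.mem_insert_of_mem hi) j (Finset.mem_insert_of_mem hj) hij)]
    rw [Set.disjoint_iUnion₂_right]
    intro i hi
    exact hdisj a (Finset.mem_insert_self a s) i (Finset.mem_insert_of_mem hi)
      (fun hai => h (hai ▸ hi))

end helpers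

lemma size_arith (ε d η n k m c : ℝ) (hε : 0 < ε) (hεd : 2 * ε ≤ d)
    (hη1 : 4 * ε + d ≤ η) (hη2 : η ≤ 1 / 4) (hm : 0 ≤ m) (hn : 0 ≤ n) (hk : 0 ≤ k)
    (hexc : n - k * m ≤ ε * n) (hkm : k * m ≤ n) (hc : (1 / 2 - η) * k ≤ c) :
    (1 / 2 - 2 * η) * n ≤ c * m := by
  have h1 : (1 / 2 - η) * k * m ≤ c * m := mul_le_mul_of_nonneg_right hc hm
  nlinarith [mul_nonneg hm hk, mul_nonneg hn hε.le]

lemma edge_arith (ε d η a b n k m : ℝ) (hε : 0 < ε) (hεd : 2 * ε ≤ d)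
    (hη1 : 4 * ε + d ≤ η) (hη2 : η ≤ 1 / 4)
    (ha0 : 0 ≤ a) (hb0 : 0 ≤ b) (hak : a ≤ k) (hbk : b ≤ k)
    (hm : 0 ≤ m) (hn : 0 ≤ n) (hkm : k * m ≤ n) :
    η * a * b * m ^ 2 + a * b * (d * m ^ 2) ≤ (η + d) * n ^ 2 := by
  have hk0 : 0 ≤ k := le_trans ha0 hak
  have h1 : a * b ≤ k * k := mul_le_mul hak hbk hb0 hk0
  have h2 : (k * m) ^ 2 ≤ n ^ 2 := by
    apply pow_le_pow_left₀ (mul_nonneg hk0 hm) hkm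
  have h3 : (0:ℝ) ≤ m ^ 2 := sq_nonneg m
  have hηd : 0 ≤ η + d := by nlinarith
  nlinarith [mul_le_mul_of_nonneg_right h1 h3, sq_nonneg n]

lemma sum_bound {V : Type*} [Fintype V] (K : SimpleGraph V) {ι : Type*} [DecidableEq ι]
    (s t : Finset ι) (f g : ι → Set V) (Γ : ι → ι → Bool) (d η : ℝ) (m : ℕ)
    (hfm : ∀ i, (f i).ncard = m) (hgm : ∀ j, (g j).ncard = m)
    (hΓ : ∀ i j, Γ i j = false → (eCount K (f i) (g j) : ℝ) ≤ d * m ^ 2)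
    (hd0 : 0 ≤ d)
    (hcard : (((s ×ˢ t).filter (fun p => Γ p.1 p.2 = true)).card : ℝ)
      ≤ η * s.card * t.card) :
    (eCount K (⋃ i ∈ s, f i) (⋃ j ∈ t, g j) : ℝ)
      ≤ η * s.card * t.card * m ^ 2 + (s.card * t.card) * (d * m ^ 2) := by
  classical
  have hsum : (eCount K (⋃ i ∈ s, f i) (⋃ j ∈ t, g j) : ℝ)
      ≤ ∑ p ∈ s ×ˢ t, (eCount K (f p.1) (g p.2) : ℝ) := by
    have h1 : eCount K (⋃ i ∈ s, f i) (⋃ j ∈ t, g j)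
        ≤ ∑ i ∈ s, ∑ j ∈ t, eCount K (f i) (g j) :=
      le_trans (eCount_biUnion_left K s f _)
        (Finset.sum_le_sum fun i _ => eCount_biUnion_right K t g (f i))
    rw [Finset.sum_product]
    exact_mod_cast h1
  have hsplit := Finset.sum_filter_add_sum_filter_not (s ×ˢ t)
      (fun p => Γ p.1 p.2 = true) (fun p => (eCount K (f p.1) (g p.2) : ℝ))
  have htrue : ∑ p ∈ (s ×ˢ t).filter (fun p => Γ p.1 p.2 = true),
      (eCount K (f p.1) (g p.2) : ℝ) ≤ η * s.card * t.card * m ^ 2 := by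
    have hb : ∀ p ∈ (s ×ˢ t).filter (fun p => Γ p.1 p.2 = true),
        (eCount K (f p.1) (g p.2) : ℝ) ≤ (m : ℝ) ^ 2 := by
      intro p _
      have h := eCount_le_mul K (f p.1) (g p.2)
      rw [hfm, hgm] at h
      calc (eCount K (f p.1) (g p.2) : ℝ) ≤ ((m * m : ℕ) : ℝ) := by exact_mod_cast h
        _ = (m : ℝ) ^ 2 := by push_cast; ring
    calc ∑ p ∈ (s ×ˢ t).filter (fun p => Γ p.1 p.2 = true),
          (eCount K (f p.1) (g p.2) : ℝ)
        ≤ (((s ×ˢ t).filter (fun p => Γ p.1 p.2 = true)).card : ℝ) * (m : ℝ) ^ 2 := by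
          have := Finset.sum_le_card_nsmul _ _ _ hb
          rwa [nsmul_eq_mul] at this
      _ ≤ η * s.card * t.card * (m : ℝ) ^ 2 :=
          mul_le_mul_of_nonneg_right hcard (sq_nonneg _)
  have hfalse : ∑ p ∈ (s ×ˢ t).filter (fun p => ¬ Γ p.1 p.2 = true),
      (eCount K (f p.1) (g p.2) : ℝ) ≤ (s.card * t.card) * (d * m ^ 2) := by
    have hb : ∀ p ∈ (s ×ˢ t).filter (fun p => ¬ Γ p.1 p.2 = true),
        (eCount K (f p.1) (g p.2) : ℝ) ≤ d * m ^ 2 := by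
      intro p hp
      exact hΓ p.1 p.2 (Bool.eq_false_iff.mpr (Finset.mem_filter.mp hp).2)
    have h1 := Finset.sum_le_card_nsmul _ _ _ hb
    rw [nsmul_eq_mul] at h1
    refine le_trans h1 ?_
    have h2 : ((((s ×ˢ t).filter (fun p => ¬ Γ p.1 p.2 = true)).card : ℝ))
        ≤ (s.card : ℝ) * t.card := by
      have := Finset.card_filter_le (s ×ˢ t) (fun p => ¬ Γ p.1 p.2 = true)
      rw [Finset.card_product] at this
      exact_mod_cast this
    exact mul_le_mul_of_nonneg_right h2 (mul_nonneg hd0 (sq_nonneg _))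
  linarith


set_option maxHeartbeats 1000000 in
/-- If the coloring of the reduced graph is `η`-extremal, then the coloring of
`G` is `2η`-extremal.  The reduced graph is given by clusters
`U 0, …, U (k-1) ⊆ X` and `Vc 0, …, Vc (k-1) ⊆ Y`, pairwise disjoint, each of
size `m`, leaving exceptional sets of size at most `εn`; the reduced red (blue)
non-edges correspond to cluster pairs carrying at most `d·m²` red (blue) edges
of `G`. -/
theorem reduced_extremal_implies_extremal (ε d η : ℝ) (n k m : ℕ)
    (hε : 0 < ε) (hεd : 2 * ε ≤ d) (hη1 : 4 * ε + d ≤ η) (hη2 : η ≤ 1 / 4)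
    (hk : 0 < k)
    (G R B : SimpleGraph (Fin n ⊕ Fin n))
    (hbip : G ≤ completeBipartiteGraph (Fin n) (Fin n))
    (hcol : R ⊔ B = G)
    (U Vc : Fin k → Set (Fin n ⊕ Fin n))
    (hU : ∀ i, U i ⊆ Set.range Sum.inl)
    (hV : ∀ i, Vc i ⊆ Set.range Sum.inr)
    (hUdisj : ∀ i j, i ≠ j → Disjoint (U i) (U j))
    (hVdisj : ∀ i j, i ≠ j → Disjoint (Vc i) (Vc j))
    (hUm : ∀ i, (U i).ncard = m) (hVm : ∀ i, (Vc i).ncard = m)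
    (hexc : (n : ℝ) - k * m ≤ ε * n)
    (ΓR ΓB : Fin k → Fin k → Bool)
    (hΓR : ∀ i j, ΓR i j = false → (eCount R (U i) (Vc j) : ℝ) ≤ d * m ^ 2)
    (hΓB : ∀ i j, ΓB i j = false → (eCount B (U i) (Vc j) : ℝ) ≤ d * m ^ 2)
    -- the coloring of the reduced graph is η-extremal:
    (hext : ∃ (𝒰 𝒱₁ 𝒱₂ : Finset (Fin k)),
      𝒱₁ ∪ 𝒱₂ = Finset.univ ∧ Disjoint 𝒱₁ 𝒱₂ ∧
      (1 / 2 - η) * k ≤ (𝒰.card : ℝ) ∧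
      (1 / 2 - η) * k ≤ (𝒱₁.card : ℝ) ∧
      (1 / 2 - η) * k ≤ (𝒱₂.card : ℝ) ∧
      (((𝒰 ×ˢ 𝒱₁).filter (fun p => ΓR p.1 p.2 = true)).card : ℝ)
        ≤ η * 𝒰.card * 𝒱₁.card ∧
      (((𝒰 ×ˢ 𝒱₂).filter (fun p => ΓB p.1 p.2 = true)).card : ℝ)
        ≤ η * 𝒰.card * 𝒱₂.card) :
    -- then the coloring of G is 2η-extremal:
    ∃ (X' Y₁ Y₂ : Set (Fin n ⊕ Fin n)),
      X' ⊆ Set.range Sum.inl ∧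
      Y₁ ∪ Y₂ = Set.range Sum.inr ∧ Disjoint Y₁ Y₂ ∧
      (1 / 2 - 2 * η) * n ≤ (X'.ncard : ℝ) ∧
      (1 / 2 - 2 * η) * n ≤ (Y₁.ncard : ℝ) ∧
      (1 / 2 - 2 * η) * n ≤ (Y₂.ncard : ℝ) ∧
      (eCount R X' Y₁ : ℝ) ≤ 2 * η * n ^ 2 ∧
      (eCount B X' Y₂ : ℝ) ≤ 2 * η * n ^ 2 := by
  classical
  obtain ⟨𝒰, 𝒱₁, 𝒱₂, hun, hd12, hc𝒰, hc1, hc2, hRcard, hBcard⟩ := hext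
  set X' : Set (Fin n ⊕ Fin n) := ⋃ i ∈ 𝒰, U i with hX'def
  set Y₁ : Set (Fin n ⊕ Fin n) := ⋃ j ∈ 𝒱₁, Vc j with hY₁def
  set Y₂ : Set (Fin n ⊕ Fin n) := Set.range Sum.inr \ Y₁ with hY₂def
  set W₂ : Set (Fin n ⊕ Fin n) := ⋃ j ∈ 𝒱₂, Vc j with hW₂def
  have hX'sub : X' ⊆ Set.range Sum.inl := Set.iUnion₂_subset fun i _ => hU i
  have hY1sub : Y₁ ⊆ Set.range Sum.inr := Set.iUnion₂_subset fun j _ => hV j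
  have hW2sub' : W₂ ⊆ Set.range Sum.inr := Set.iUnion₂_subset fun j _ => hV j
  have hninl : (Set.range (Sum.inl : Fin n → Fin n ⊕ Fin n)).ncard = n := by
    rw [← Set.image_univ, Set.ncard_image_of_injective _ Sum.inl_injective,
      Set.ncard_univ, Nat.card_eq_fintype_card, Fintype.card_fin]
  have hninr : (Set.range (Sum.inr : Fin n → Fin n ⊕ Fin n)).ncard = n := by
    rw [← Set.image_univ, Set.ncard_image_of_injective _ Sum.inr_injective,
      Set.ncard_univ, Nat.card_eq_fintype_card, Fintype.card_fin]
  -- cardinalities of the unions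
  have hXcard : X'.ncard = 𝒰.card * m := by
    rw [hX'def, ncard_biUnion_eq 𝒰 U (fun i _ j _ h => hUdisj i j h)]
    simp [hUm, Finset.sum_const, smul_eq_mul]
  have hY1card : Y₁.ncard = 𝒱₁.card * m := by
    rw [hY₁def, ncard_biUnion_eq 𝒱₁ Vc (fun i _ j _ h => hVdisj i j h)]
    simp [hVm, Finset.sum_const, smul_eq_mul]
  have hW2card : W₂.ncard = 𝒱₂.card * m := by
    rw [hW₂def, ncard_biUnion_eq 𝒱₂ Vc (fun i _ j _ h => hVdisj i j h)]
    simp [hVm, Finset.sum_const, smul_eq_mul]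
  have hVallcard : (⋃ j ∈ (Finset.univ : Finset (Fin k)), Vc j).ncard = k * m := by
    rw [ncard_biUnion_eq _ Vc (fun i _ j _ h => hVdisj i j h)]
    simp [hVm, Finset.sum_const, smul_eq_mul]
  have hkm : k * m ≤ n := by
    have h2 : (⋃ j ∈ (Finset.univ : Finset (Fin k)), Vc j) ⊆ Set.range Sum.inr :=
      Set.iUnion₂_subset fun j _ => hV j
    have := Set.ncard_le_ncard h2 (Set.toFinite _)
    rwa [hVallcard, hninr] at this
  have hkmR : (k : ℝ) * m ≤ n := by exact_mod_cast hkm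
  -- W₂ ⊆ Y₂
  have hW2Y2 : W₂ ⊆ Y₂ := by
    rw [hY₂def, Set.subset_diff]
    refine ⟨hW2sub', ?_⟩
    rw [hW₂def, Set.disjoint_iUnion₂_left]
    intro j hj
    rw [hY₁def, Set.disjoint_iUnion₂_right]
    intro j' hj'
    exact hVdisj j j' (fun h => Finset.disjoint_left.mp hd12 hj' (h ▸ hj))
  -- decomposition of Y₂
  set E : Set (Fin n ⊕ Fin n) :=
    Set.range Sum.inr \ ⋃ j ∈ (Finset.univ : Finset (Fin k)), Vc j with hEdef
  have hY2sub : Y₂ ⊆ W₂ ∪ E := by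
    rintro y ⟨hyr, hy1⟩
    by_cases hy : y ∈ ⋃ j ∈ (Finset.univ : Finset (Fin k)), Vc j
    · simp only [Set.mem_iUnion, exists_prop] at hy
      obtain ⟨j, -, hyj⟩ := hy
      have hj12 : j ∈ 𝒱₁ ∪ 𝒱₂ := by rw [hun]; exact Finset.mem_univ j
      rcases Finset.mem_union.mp hj12 with h1 | h2
      · exact absurd (Set.mem_iUnion₂.mpr ⟨j, h1, hyj⟩) hy1
      · exact Or.inl (Set.mem_iUnion₂.mpr ⟨j, h2, hyj⟩)
    · exact Or.inr ⟨hyr, hy⟩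
  have hEcard : E.ncard = n - k * m := by
    rw [hEdef, Set.ncard_diff (Set.iUnion₂_subset fun j _ => hV j) (Set.toFinite _),
      hVallcard, hninr]
  have hEcardR : (E.ncard : ℝ) ≤ ε * n := by
    rw [hEcard, Nat.cast_sub hkm]
    push_cast
    linarith
  -- basic positivity
  have hm0 : (0:ℝ) ≤ m := Nat.cast_nonneg m
  have hn0 : (0:ℝ) ≤ n := Nat.cast_nonneg n
  have hk0 : (0:ℝ) ≤ k := Nat.cast_nonneg k
  have hd0 : (0:ℝ) ≤ d := by linarith
  have hkR : ∀ s : Finset (Fin k), (s.card : ℝ) ≤ k := by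
    intro s
    exact_mod_cast le_trans (Finset.card_le_univ s) (le_of_eq (by simp))
  -- size bounds
  have hXsize : (1 / 2 - 2 * η) * n ≤ (X'.ncard : ℝ) := by
    rw [hXcard]; push_cast
    exact size_arith ε d η n k m _ hε hεd hη1 hη2 hm0 hn0 hk0 hexc hkmR hc𝒰
  have hY1size : (1 / 2 - 2 * η) * n ≤ (Y₁.ncard : ℝ) := by
    rw [hY1card]; push_cast
    exact size_arith ε d η n k m _ hε hεd hη1 hη2 hm0 hn0 hk0 hexc hkmR hc1
  have hY2size : (1 / 2 - 2 * η) * n ≤ (Y₂.ncard : ℝ) := by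
    have h1 : W₂.ncard ≤ Y₂.ncard := Set.ncard_le_ncard hW2Y2 (Set.toFinite _)
    have h2 : (1 / 2 - 2 * η) * n ≤ (W₂.ncard : ℝ) := by
      rw [hW2card]; push_cast
      exact size_arith ε d η n k m _ hε hεd hη1 hη2 hm0 hn0 hk0 hexc hkmR hc2
    exact le_trans h2 (by exact_mod_cast h1)
  -- red edge bound
  have hRbound : (eCount R X' Y₁ : ℝ) ≤ 2 * η * n ^ 2 := by
    have h1 := sum_bound R 𝒰 𝒱₁ U Vc ΓR d η m hUm hVm hΓR hd0 hRcard
    have h2 := edge_arith ε d η (𝒰.card) (𝒱₁.card) n k m hε hεd hη1 hη2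
      (Nat.cast_nonneg _) (Nat.cast_nonneg _) (hkR 𝒰) (hkR 𝒱₁) hm0 hn0 hkmR
    have h5 : (eCount R X' Y₁ : ℝ) ≤ (η + d) * n ^ 2 := le_trans h1 h2
    have hfact : (η + d) * (n:ℝ) ^ 2 ≤ 2 * η * n ^ 2 := by nlinarith [sq_nonneg (n:ℝ)]
    linarith
  -- blue edge bound
  have hBbound : (eCount B X' Y₂ : ℝ) ≤ 2 * η * n ^ 2 := by
    have hdec : eCount B X' Y₂ ≤ eCount B X' W₂ + eCount B X' E :=
      le_trans (eCount_mono B (le_refl X') hY2sub) (eCount_union_right B X' W₂ E)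
    have h1 := sum_bound B 𝒰 𝒱₂ U Vc ΓB d η m hUm hVm hΓB hd0 hBcard
    have h2 := edge_arith ε d η (𝒰.card) (𝒱₂.card) n k m hε hεd hη1 hη2
      (Nat.cast_nonneg _) (Nat.cast_nonneg _) (hkR 𝒰) (hkR 𝒱₂) hm0 hn0 hkmR
    have hXn : (X'.ncard : ℝ) ≤ n := by
      have := Set.ncard_le_ncard hX'sub (Set.toFinite _)
      rw [hninl] at this; exact_mod_cast this
    have hE : (eCount B X' E : ℝ) ≤ ε * n ^ 2 := by
      have h3 : (eCount B X' E : ℝ) ≤ (X'.ncard : ℝ) * E.ncard := by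
        exact_mod_cast eCount_le_mul B X' E
      have h4 : (X'.ncard : ℝ) * E.ncard ≤ n * (ε * n) :=
        mul_le_mul hXn hEcardR (Nat.cast_nonneg _) hn0
      calc (eCount B X' E : ℝ) ≤ (X'.ncard : ℝ) * E.ncard := h3
        _ ≤ (n:ℝ) * (ε * n) := h4
        _ = ε * (n:ℝ) ^ 2 := by ring
    have hdecR : (eCount B X' Y₂ : ℝ) ≤ (eCount B X' W₂ : ℝ) + eCount B X' E := by
      exact_mod_cast hdec
    have h5 : (eCount B X' W₂ : ℝ) ≤ (η + d) * n ^ 2 := le_trans h1 h2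
    have hfact : (η + d) * (n:ℝ) ^ 2 + ε * (n:ℝ) ^ 2 ≤ 2 * η * n ^ 2 := by
      nlinarith [sq_nonneg (n:ℝ)]
    linarith
  exact ⟨X', Y₁, Y₂, hX'sub, Set.union_diff_cancel hY1sub, Set.disjoint_sdiff_right,
    hXsize, hY1size, hY2size, hRbound, hBbound⟩
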